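/- (Hamilton–Jacobi theorem.) Let Q be a finite-dimensional real normed vector space with continuous dual Q*, let Ω be the canonical symplectic form on Q × Q*, let h : Q × Q* → ℝ be differentiable with Hamiltonian vector field X_h, and let α : Q → Q* be a differentiable closed 1-form. Then α is a solution to the Hamilton–Jacobi problem — that is, the graph of α is invariant by X_h, meaning that for every x ∈ Q the Q*-component of X_h(x, α(x)) equals Dα_x applied to the Q-component of X_h(x, α(x)) — if and only if d(α*h) = 0, i.e. the Fréchet derivative of the function x ↦ h(x, α(x)) vanishes at every x ∈ Q (so that h ∘ dS is locally constant). -/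

import Mathlib

/-- **Hamilton–Jacobi theorem.** Let `Q` be a finite-dimensional real normed
space with continuous dual `Q* = Q →L[ℝ] ℝ`, let `Ω((u,p),(v,q)) = q(u) − p(v)` be the
canonical symplectic form on `Q × Q*`, let `X_h` be a Hamiltonian vector field of a
differentiable `h : Q × Q* → ℝ`, and let `α : Q → Q*` be a differentiable closed `1`-form.
Then the graph of `α` is invariant by `X_h` (i.e., for each `x`, the `Q*`-component of
`X_h(x, α(x))` is `Dα_x` applied to its `Q`-component) if and only if `d(α*h) = 0`, i.e.
the derivative of `x ↦ h(x, α(x))` vanishes everywhere. -/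
theorem hamilton_jacobi
    (Q : Type*) [NormedAddCommGroup Q] [NormedSpace ℝ Q] [FiniteDimensional ℝ Q]
    (h : Q × (Q →L[ℝ] ℝ) → ℝ) (hh : Differentiable ℝ h)
    (X : Q × (Q →L[ℝ] ℝ) → Q × (Q →L[ℝ] ℝ))
    (hX : ∀ z w : Q × (Q →L[ℝ] ℝ), w.2 (X z).1 - (X z).2 w.1 = fderiv ℝ h z w)
    (α : Q → Q →L[ℝ] ℝ) (hα : Differentiable ℝ α)
    (hclosed : ∀ x u v : Q, fderiv ℝ α x u v = fderiv ℝ α x v u) :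
    (∀ x : Q, (X (x, α x)).2 = fderiv ℝ α x ((X (x, α x)).1)) ↔
    (∀ x : Q, fderiv ℝ (fun y => h (y, α y)) x = 0) := by
  have key : ∀ x v : Q, fderiv ℝ (fun y => h (y, α y)) x v
      = fderiv ℝ α x v ((X (x, α x)).1) - (X (x, α x)).2 v := by
    intro x v
    have hcomp : HasFDerivAt (fun y => h (y, α y))
        ((fderiv ℝ h (x, α x)).comp ((ContinuousLinearMap.id ℝ Q).prod (fderiv ℝ α x))) x :=
      (hh (x, α x)).hasFDerivAt.comp x
        (HasFDerivAt.prodMk (hasFDerivAt_id x) (hα x).hasFDerivAt)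
    rw [hcomp.fderiv]
    have := hX (x, α x) (v, fderiv ℝ α x v)
    simpa using this.symm
  constructor
  · intro hinv x
    ext v
    have := key x v
    rw [hinv x, hclosed x v ((X (x, α x)).1)] at this
    simpa using this
  · intro hz x
    ext v
    have := key x v
    rw [hz x] at this
    have h2 : fderiv ℝ α x v ((X (x, α x)).1) = (X (x, α x)).2 v := by
      have := this.symm
      simp at this
      linarith
    rw [hclosed x v ((X (x, α x)).1)] at h2
    simpa using h2.symm
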